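/- arXiv:1309.4011 — 3 statements merged into one kernel-verified Lean document; each statement's English description precedes it below -/
import Mathlib

section
/- Let k be a field and M a cancellative, torsion-free commutative additive monoid, and let I be a prime monoid ideal of M. Then the ideal of the monoid algebra AddMonoidAlgebra k M generated by the monomials {single m 1 | m ∈ I} is a prime ideal of the ring AddMonoidAlgebra k M. -/
open Finset

section Grothendieck

variable {M : Type*} [AddCancelCommMonoid M]

/-- The Grothendieck group of `M`, as the localization at the top submonoid. -/
abbrev GroGroup (M : Type*) [AddCancelCommMonoid M] := AddLocalization (⊤ : AddSubmonoid M)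

namespace GroGroup

theorem exists_neg (x : GroGroup M) : ∃ y : GroGroup M, x + y = 0 := by
  induction x using AddLocalization.ind with
  | _ p =>
    refine ⟨AddLocalization.mk p.2 ⟨p.1, trivial⟩, ?_⟩
    rw [← AddLocalization.mk_zero, AddLocalization.mk_add, AddLocalization.mk_eq_mk_iff']
    simp [add_comm]

noncomputable instance : Neg (GroGroup M) := ⟨fun x => Classical.choose (exists_neg x)⟩

noncomputable instance : AddCommGroup (GroGroup M) :=
  { (inferInstance : AddCommMonoid (GroGroup M)) with
    neg := Neg.neg
    sub := fun a b => a + -b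
    zsmul := zsmulRec
    neg_add_cancel := fun x => by
      rw [add_comm]; exact Classical.choose_spec (exists_neg x) }

theorem noZeroSMulDivisors_nat (htf : ∀ (n : ℕ) (a b : M), 0 < n → n • a = n • b → a = b) :
    NoZeroSMulDivisors ℕ (GroGroup M) := by
  constructor
  intro n x h
  rcases Nat.eq_zero_or_pos n with hn | hn
  · exact Or.inl hn
  right
  induction x using AddLocalization.ind with
  | _ p =>
    rw [AddLocalization.mk_nsmul, ← AddLocalization.mk_zero,
      AddLocalization.mk_eq_mk_iff'] at h
    have hab : p.1 = (p.2 : M) := by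
      apply htf n _ _ hn
      simpa using h
    rw [← AddLocalization.mk_zero, AddLocalization.mk_eq_mk_iff']
    simpa using hab

theorem noZeroSMulDivisors_int (htf : ∀ (n : ℕ) (a b : M), 0 < n → n • a = n • b → a = b) :
    NoZeroSMulDivisors ℤ (GroGroup M) := by
  haveI := noZeroSMulDivisors_nat (M := M) htf
  haveI : IsAddTorsionFree (GroGroup M) := ⟨fun n hn a b h => by
    have h' : n • (a - b) = 0 := by rw [smul_sub, sub_eq_zero]; exact h
    exact sub_eq_zero.mp ((smul_eq_zero.mp h').resolve_left hn)⟩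
  exact inferInstance

theorem uniqueSums (htf : ∀ (n : ℕ) (a b : M), 0 < n → n • a = n • b → a = b) :
    UniqueSums (GroGroup M) := by
  haveI := noZeroSMulDivisors_int (M := M) htf
  constructor
  intro A B hA hB
  classical
  set H : Submodule ℤ (GroGroup M) := Submodule.span ℤ (↑(A ∪ B) : Set (GroGroup M)) with hH
  haveI : Module.Finite ℤ H := Module.Finite.span_of_finite ℤ (Finset.finite_toSet _)
  haveI : Module.Free ℤ H := Module.free_of_finite_type_torsion_free'
  haveI : UniqueSums (Module.Free.ChooseBasisIndex ℤ H →₀ ℤ) := inferInstance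
  haveI hUH : UniqueSums H :=
    ((Module.Free.chooseBasis ℤ H).repr.toAddEquiv.uniqueSums_iff).mpr inferInstance
  have hmem : ∀ x ∈ A ∪ B, x ∈ H := fun x hx => Submodule.subset_span hx
  have hinj : Function.Injective ((↑) : H → GroGroup M) := Subtype.val_injective
  set A' : Finset H := A.preimage ((↑) : H → GroGroup M) (hinj.injOn) with hA'
  set B' : Finset H := B.preimage ((↑) : H → GroGroup M) (hinj.injOn) with hB'
  have hA'ne : A'.Nonempty := by
    obtain ⟨a, ha⟩ := hA
    exact ⟨⟨a, hmem a (mem_union_left _ ha)⟩, by simp [hA', Finset.mem_preimage, ha]⟩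
  have hB'ne : B'.Nonempty := by
    obtain ⟨b, hb⟩ := hB
    exact ⟨⟨b, hmem b (mem_union_right _ hb)⟩, by simp [hB', Finset.mem_preimage, hb]⟩
  obtain ⟨a0, ha0, b0, hb0, hu⟩ := hUH.uniqueAdd_of_nonempty hA'ne hB'ne
  rw [hA', Finset.mem_preimage] at ha0
  rw [hB', Finset.mem_preimage] at hb0
  refine ⟨a0, ha0, b0, hb0, ?_⟩
  intro a b ha hb heq
  have haH : a ∈ H := hmem a (mem_union_left _ ha)
  have hbH : b ∈ H := hmem b (mem_union_right _ hb)
  have h1 : (⟨a, haH⟩ : H) ∈ A' := by simp [hA', Finset.mem_preimage, ha]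
  have h2 : (⟨b, hbH⟩ : H) ∈ B' := by simp [hB', Finset.mem_preimage, hb]
  have := hu h1 h2 (by exact Subtype.ext heq)
  exact ⟨congrArg Subtype.val this.1, congrArg Subtype.val this.2⟩

end GroGroup

theorem uniqueSums_of_torsionFree
    (htf : ∀ (n : ℕ) (a b : M), 0 < n → n • a = n • b → a = b) :
    UniqueSums M := by
  haveI := GroGroup.uniqueSums (M := M) htf
  refine UniqueSums.of_injective_addHom
    ⟨fun a => AddLocalization.mk a (0 : (⊤ : AddSubmonoid M)), ?_⟩
    (AddLocalization.mk_left_injective _) inferInstance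
  intro a b
  rw [AddLocalization.mk_add, add_zero]

end Grothendieck

/-- A monoid ideal of a commutative additive monoid `M`: a subset `I` such that
`m + m' ∈ I` whenever `m ∈ I` and `m' ∈ M`. -/
def IsMonoidIdeal {M : Type*} [AddCommMonoid M] (I : Set M) : Prop :=
  ∀ m ∈ I, ∀ m' : M, m + m' ∈ I

/-- A prime monoid ideal: a monoid ideal whose complement is an additive submonoid. -/
def IsPrimeMonoidIdeal {M : Type*} [AddCommMonoid M] (I : Set M) : Prop :=
  IsMonoidIdeal I ∧ (0 : M) ∉ I ∧ ∀ m m' : M, m ∉ I → m' ∉ I → m + m' ∉ I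

section Span

variable (k : Type*) [Field k] {M : Type*} [AddCancelCommMonoid M]

/-- Membership in the span of monomials with exponents in a monoid ideal. -/
theorem mem_span_monomials_iff (I : Set M) (hI : IsMonoidIdeal I)
    (f : AddMonoidAlgebra k M) :
    f ∈ Ideal.span {x : AddMonoidAlgebra k M | ∃ m ∈ I, x = AddMonoidAlgebra.single m 1} ↔
      ∀ m ∈ f.coeff.support, m ∈ I := by
  classical
  constructor
  · intro hf
    let J' : Ideal (AddMonoidAlgebra k M) :=
      { carrier := {f : AddMonoidAlgebra k M | ∀ m ∈ f.coeff.support, m ∈ I}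
        zero_mem' := by simp
        add_mem' := fun {x y} hx hy m hm => by
          rw [AddMonoidAlgebra.coeff_add] at hm
          rcases Finset.mem_union.mp (Finsupp.support_add hm) with h | h
          · exact hx m h
          · exact hy m h
        smul_mem' := fun c x hx m hm => by
          rw [smul_eq_mul] at hm
          obtain ⟨a, ha, b, hb, rfl⟩ := Finset.mem_add.mp (AddMonoidAlgebra.support_coeff_mul_subset c x hm)
          rw [add_comm]
          exact hI b (hx b hb) a }
    have hle : Ideal.span {x : AddMonoidAlgebra k M | ∃ m ∈ I, x = AddMonoidAlgebra.single m 1}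
        ≤ J' := by
      rw [Ideal.span_le]
      rintro x ⟨m, hm, rfl⟩ m' hm'
      have := Finsupp.support_single_subset hm'
      rw [Finset.mem_singleton] at this
      exact this ▸ hm
    exact hle hf
  · intro hf
    have : f = ∑ m ∈ f.coeff.support, AddMonoidAlgebra.single m (f.coeff m) := by
      exact (AddMonoidAlgebra.sum_coeff_single f).symm
    rw [this]
    refine Ideal.sum_mem _ fun m hm => ?_
    have h1 : (AddMonoidAlgebra.single m 1 : AddMonoidAlgebra k M) ∈
        Ideal.span {x : AddMonoidAlgebra k M | ∃ m ∈ I, x = AddMonoidAlgebra.single m 1} :=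
      Ideal.subset_span ⟨m, hf m hm, rfl⟩
    have h2 : (AddMonoidAlgebra.single m (f.coeff m) : AddMonoidAlgebra k M)
        = AddMonoidAlgebra.single (0 : M) (f.coeff m) * AddMonoidAlgebra.single m 1 := by
      rw [AddMonoidAlgebra.single_mul_single, zero_add, mul_one]
    rw [h2]
    exact Ideal.mul_mem_left _ _ h1

end Span

/-- Let `k` be a field and `M` a cancellative, torsion-free commutative additive monoid.
For a prime monoid ideal `I` of `M`, the ideal of `AddMonoidAlgebra k M` generated by the
monomials `single m 1`, `m ∈ I`, is a prime ideal. -/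
theorem isPrime_span_monomials_of_primeMonoidIdeal (k : Type*) [Field k] {M : Type*}
    [AddCancelCommMonoid M]
    (htf : ∀ (n : ℕ) (a b : M), 0 < n → n • a = n • b → a = b)
    (I : Set M) (hI : IsPrimeMonoidIdeal I) :
    (Ideal.span {x : AddMonoidAlgebra k M |
      ∃ m ∈ I, x = AddMonoidAlgebra.single m 1}).IsPrime := by
  classical
  haveI : UniqueSums M := uniqueSums_of_torsionFree htf
  obtain ⟨hIdeal, h0, hprime⟩ := hI
  constructor
  · rw [Ideal.ne_top_iff_one]
    intro h
    rw [mem_span_monomials_iff k I hIdeal] at h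
    apply h0
    apply h 0
    rw [AddMonoidAlgebra.one_def]
    rw [AddMonoidAlgebra.coeff_single, Finsupp.support_single_ne_zero _ (one_ne_zero : (1 : k) ≠ 0)]
    exact Finset.mem_singleton_self 0
  · intro f g hfg
    by_contra hcon
    push_neg at hcon
    obtain ⟨hf, hg⟩ := hcon
    rw [mem_span_monomials_iff k I hIdeal] at hf hg hfg
    push_neg at hf hg
    obtain ⟨mf, hmf, hmfI⟩ := hf
    obtain ⟨mg, hmg, hmgI⟩ := hg
    set p : M → Prop := fun m => m ∉ I with hp
    set fR : AddMonoidAlgebra k M := AddMonoidAlgebra.ofCoeff (Finsupp.filter p f.coeff) with hfR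
    set gR : AddMonoidAlgebra k M := AddMonoidAlgebra.ofCoeff (Finsupp.filter p g.coeff) with hgR
    have hfR0 : fR ≠ 0 := by
      intro h
      have : fR.coeff mf = f.coeff mf := Finsupp.filter_apply_pos p f.coeff hmfI
      rw [h] at this
      exact Finsupp.mem_support_iff.mp hmf this.symm
    have hgR0 : gR ≠ 0 := by
      intro h
      have : gR.coeff mg = g.coeff mg := Finsupp.filter_apply_pos p g.coeff hmgI
      rw [h] at this
      exact Finsupp.mem_support_iff.mp hmg this.symm
    -- support of fR * gR avoids I
    have hsupp : ∀ m ∈ (fR * gR).coeff.support, m ∉ I := by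
      intro m hm
      obtain ⟨a, ha, b, hb, rfl⟩ := Finset.mem_add.mp (AddMonoidAlgebra.support_coeff_mul_subset fR gR hm)
      rw [hfR, AddMonoidAlgebra.coeff_ofCoeff, Finsupp.support_filter, Finset.mem_filter] at ha
      rw [hgR, AddMonoidAlgebra.coeff_ofCoeff, Finsupp.support_filter, Finset.mem_filter] at hb
      exact hprime a b ha.2 hb.2
    -- products with one factor supported in I get killed by filter p
    have hleft : ∀ x y : AddMonoidAlgebra k M, (∀ m ∈ x.coeff.support, m ∈ I) →
        Finsupp.filter p (x * y).coeff = 0 := by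
      intro x y hx
      rw [Finsupp.filter_eq_zero_iff]
      intro m hpm
      by_contra hne
      obtain ⟨a, ha, b, hb, rfl⟩ :=
        Finset.mem_add.mp (AddMonoidAlgebra.support_coeff_mul_subset x y (Finsupp.mem_support_iff.mpr hne))
      exact hpm (hIdeal a (hx a ha) b)
    have hright : ∀ x y : AddMonoidAlgebra k M, (∀ m ∈ y.coeff.support, m ∈ I) →
        Finsupp.filter p (x * y).coeff = 0 := by
      intro x y hy
      rw [Finsupp.filter_eq_zero_iff]
      intro m hpm
      by_contra hne
      obtain ⟨a, ha, b, hb, rfl⟩ :=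
        Finset.mem_add.mp (AddMonoidAlgebra.support_coeff_mul_subset x y (Finsupp.mem_support_iff.mpr hne))
      rw [add_comm] at hpm
      exact hpm (hIdeal b (hy b hb) a)
    -- fR * gR = filter p (f * g)
    have hkey : Finsupp.filter p (f * g).coeff = (fR * gR).coeff := by
      set fI : AddMonoidAlgebra k M := AddMonoidAlgebra.ofCoeff (Finsupp.filter (fun m => m ∈ I) f.coeff) with hfI
      set gI : AddMonoidAlgebra k M := AddMonoidAlgebra.ofCoeff (Finsupp.filter (fun m => m ∈ I) g.coeff) with hgI
      have hIf : ∀ m ∈ fI.coeff.support, m ∈ I := by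
        intro m hm
        rw [AddMonoidAlgebra.coeff_ofCoeff, Finsupp.support_filter, Finset.mem_filter] at hm
        exact hm.2
      have hIg : ∀ m ∈ gI.coeff.support, m ∈ I := by
        intro m hm
        rw [AddMonoidAlgebra.coeff_ofCoeff, Finsupp.support_filter, Finset.mem_filter] at hm
        exact hm.2
      have hsplitf : f = fI + fR :=
        AddMonoidAlgebra.coeff_injective (Finsupp.filter_pos_add_filter_neg f.coeff (fun m => m ∈ I)).symm
      have hsplitg : g = gI + gR :=
        AddMonoidAlgebra.coeff_injective (Finsupp.filter_pos_add_filter_neg g.coeff (fun m => m ∈ I)).symm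
      calc Finsupp.filter p (f * g).coeff
          = Finsupp.filter p (fI * g + fR * gI + fR * gR).coeff := by
            congr 1
            rw [hsplitf, hsplitg]
            ring_nf
        _ = (fR * gR).coeff := by
            rw [AddMonoidAlgebra.coeff_add, AddMonoidAlgebra.coeff_add, Finsupp.filter_add, Finsupp.filter_add, hleft _ _ hIf,
              hright _ _ hIg, zero_add, zero_add,
              (Finsupp.filter_eq_self_iff _ _).mpr
                (fun m hm => hsupp m (Finsupp.mem_support_iff.mpr hm))]
    have hzero : Finsupp.filter p (f * g).coeff = 0 := by
      rw [Finsupp.filter_eq_zero_iff]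
      intro m hpm
      by_contra hne
      exact hpm (hfg m (Finsupp.mem_support_iff.mpr hne))
    rw [hkey, AddMonoidAlgebra.coeff_eq_zero] at hzero
    rcases (mul_eq_zero (M₀ := AddMonoidAlgebra k M)).mp hzero with h | h
    · exact hfR0 h
    · exact hgR0 h
end

section
/- Let k be a field, M a commutative additive monoid, and I a monoid ideal of M. Then the ideal of AddMonoidAlgebra k M generated by the monomials {single m 1 | m ∈ I} equals the set of elements of AddMonoidAlgebra k M whose support is contained in I. In particular, for m ∈ M the monomial single m 1 lies in this ideal if and only if m ∈ I, and the map sending a monoid ideal I of M to the ring ideal it generates is injective. -/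
lemma span_eq_aux (k : Type*) [Field k] {M : Type*}
    [AddCommMonoid M] (I : Set M) (hI : IsMonoidIdeal I) :
    ((Ideal.span {x : AddMonoidAlgebra k M | ∃ m ∈ I, x = AddMonoidAlgebra.single m 1} :
        Ideal (AddMonoidAlgebra k M)) : Set (AddMonoidAlgebra k M)) =
      {x : AddMonoidAlgebra k M | (x.coeff.support : Set M) ⊆ I} := by
  classical
  apply le_antisymm
  · have : ({x : AddMonoidAlgebra k M | (x.coeff.support : Set M) ⊆ I}) =
        (({ carrier := {x : AddMonoidAlgebra k M | (x.coeff.support : Set M) ⊆ I}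
            add_mem' := by
              intro a b ha hb
              refine Set.Subset.trans ?_ (Set.union_subset ha hb)
              exact_mod_cast Finset.coe_subset.mpr (Finsupp.support_add)
            zero_mem' := by simp
            smul_mem' := by
              intro c x hx
              intro m hm
              have h := AddMonoidAlgebra.support_coeff_mul_subset c x hm
              simp only [Finset.mem_add] at h
              obtain ⟨a, _, b, hb, rfl⟩ := h
              rw [add_comm]
              exact hI b (hx hb) a } : Ideal (AddMonoidAlgebra k M)) :
          Set (AddMonoidAlgebra k M)) := rfl
    rw [this]
    refine SetLike.coe_subset_coe.mpr (Ideal.span_le.mpr ?_)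
    rintro x ⟨m, hm, rfl⟩
    intro a ha
    simp only [Finset.mem_coe, Finsupp.mem_support_iff, AddMonoidAlgebra.coeff_single] at ha
    rcases Finsupp.single_apply_ne_zero.mp ha with ⟨rfl, _⟩
    exact hm
  · intro x hx
    rw [SetLike.mem_coe, ← AddMonoidAlgebra.sum_coeff_single x, Finsupp.sum]
    apply Ideal.sum_mem
    intro m hm
    have : (AddMonoidAlgebra.single m (x.coeff m) : AddMonoidAlgebra k M) =
        AddMonoidAlgebra.single (0 : M) (x.coeff m) * AddMonoidAlgebra.single m 1 := by
      rw [AddMonoidAlgebra.single_mul_single, zero_add, mul_one]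
    rw [this]
    exact Ideal.mul_mem_left _ _ (Ideal.subset_span ⟨m, hx hm, rfl⟩)

/-- For a monoid ideal `I` of `M`, the ideal of `AddMonoidAlgebra k M` generated by the
monomials with exponents in `I` consists exactly of the elements with support contained
in `I`; in particular `single m 1` lies in it iff `m ∈ I`, and the map from monoid ideals
to the ring ideals they generate is injective. -/
theorem span_monomials_eq_support_subset (k : Type*) [Field k] {M : Type*}
    [AddCommMonoid M] (I J : Set M) (hI : IsMonoidIdeal I) (hJ : IsMonoidIdeal J) :
    ((Ideal.span {x : AddMonoidAlgebra k M | ∃ m ∈ I, x = AddMonoidAlgebra.single m 1} :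
        Ideal (AddMonoidAlgebra k M)) : Set (AddMonoidAlgebra k M)) =
      {x : AddMonoidAlgebra k M | (x.coeff.support : Set M) ⊆ I} ∧
    (∀ m : M, AddMonoidAlgebra.single (R := k) m 1 ∈
      Ideal.span {x : AddMonoidAlgebra k M | ∃ m ∈ I, x = AddMonoidAlgebra.single m 1} ↔
        m ∈ I) ∧
    (Ideal.span {x : AddMonoidAlgebra k M | ∃ m ∈ I, x = AddMonoidAlgebra.single m 1} =
      Ideal.span {x : AddMonoidAlgebra k M | ∃ m ∈ J, x = AddMonoidAlgebra.single m 1} →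
        I = J) := by
  have key : ∀ (K : Set M), IsMonoidIdeal K → ∀ m : M,
      AddMonoidAlgebra.single (R := k) m 1 ∈
        Ideal.span {x : AddMonoidAlgebra k M | ∃ m ∈ K, x = AddMonoidAlgebra.single m 1} ↔
        m ∈ K := by
    intro K hK m
    constructor
    · intro h
      have := span_eq_aux k K hK ▸ (Set.mem_setOf_eq ▸ h)
      have h2 : ((AddMonoidAlgebra.single (R := k) m 1).coeff.support : Set M) ⊆ K := this
      apply h2
      simp [AddMonoidAlgebra.coeff_single, Finsupp.support_single_ne_zero m (one_ne_zero)]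
    · intro h
      exact Ideal.subset_span ⟨m, h, rfl⟩
  refine ⟨span_eq_aux k I hI, key I hI, ?_⟩
  intro h
  ext m
  rw [← key I hI m, ← key J hJ m, h]
end

section
/- Let k be a field, M a commutative additive monoid, and S an additive submonoid of M whose complement I = M ∖ S is a monoid ideal of M. Then the composition of the ring homomorphism AddMonoidAlgebra k S → AddMonoidAlgebra k M induced by the inclusion S ↪ M (mapping single s c to single s c) with the quotient map AddMonoidAlgebra k M → AddMonoidAlgebra k M ⧸ J, where J is the ideal generated by {single m 1 | m ∈ I}, is a ring isomorphism AddMonoidAlgebra k S ≃ AddMonoidAlgebra k M ⧸ J. -/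
set_option synthInstance.maxHeartbeats 1000000 in
/-- Let `S` be an additive submonoid of `M` whose complement `I = M ∖ S` is a monoid
ideal. Then the composite `k[S] → k[M] → k[M]/J`, where `J` is the ideal generated by the
monomials with exponents in `I`, is a ring isomorphism. -/
theorem bijective_quotient_comp_mapDomain (k : Type*) [Field k] {M : Type*}
    [AddCommMonoid M] (S : AddSubmonoid M) (hI : IsMonoidIdeal ((S : Set M)ᶜ)) :
    Function.Bijective
      ((Ideal.Quotient.mk (Ideal.span {x : AddMonoidAlgebra k M |
          ∃ m ∈ (S : Set M)ᶜ, x = AddMonoidAlgebra.single m 1})).comp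
        (AddMonoidAlgebra.mapDomainRingHom k S.subtype)) := by
  classical
  set I : Set M := (S : Set M)ᶜ with hIdef
  set J : Ideal (AddMonoidAlgebra k M) :=
    Ideal.span {x : AddMonoidAlgebra k M | ∃ m ∈ I, x = AddMonoidAlgebra.single m 1} with hJ
  -- key characterization of J
  have key : ∀ x : AddMonoidAlgebra k M, x ∈ J ↔ ∀ m ∈ x.coeff.support, m ∈ I := by
    intro x
    constructor
    · intro hx
      refine Submodule.span_induction ?_ ?_ ?_ ?_ hx
      · rintro y ⟨m, hm, rfl⟩ n hn
        have := Finsupp.support_single_subset hn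
        simp only [Finset.mem_singleton] at this
        subst this; exact hm
      · simp
      · intro a b _ _ ha hb n hn
        rcases Finset.mem_union.mp (Finsupp.support_add hn) with h | h
        · exact ha n h
        · exact hb n h
      · intro a b _ hb n hn
        have := AddMonoidAlgebra.support_coeff_mul_subset a b hn
        rw [Finset.mem_add] at this
        obtain ⟨p, hp, q, hq, rfl⟩ := this
        have : q + p ∈ I := hI q (hb q hq) p
        rwa [add_comm] at this
    · intro hx
      have : x = x.coeff.sum fun m c => AddMonoidAlgebra.single m c := (AddMonoidAlgebra.sum_coeff_single x).symm
      rw [this]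
      refine Ideal.sum_mem _ ?_
      intro m hm
      have : (AddMonoidAlgebra.single m (x.coeff m) : AddMonoidAlgebra k M)
          = AddMonoidAlgebra.single 0 (x.coeff m) * AddMonoidAlgebra.single m 1 := by
        rw [AddMonoidAlgebra.single_mul_single, zero_add, mul_one]
      show AddMonoidAlgebra.single m (x.coeff m) ∈ J
      rw [this]
      exact Ideal.mul_mem_left _ _ (Ideal.subset_span ⟨m, hx m hm, rfl⟩)
  constructor
  · set φ := (Ideal.Quotient.mk J).comp (AddMonoidAlgebra.mapDomainRingHom k S.subtype) with hφ
    rw [injective_iff_map_eq_zero φ]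
    intro f hf
    have hmem : (AddMonoidAlgebra.mapDomainRingHom k S.subtype f : AddMonoidAlgebra k M) ∈ J :=
      Ideal.Quotient.eq_zero_iff_mem.mp (by simpa [hφ] using hf)
    rw [key] at hmem
    have hzero : (AddMonoidAlgebra.mapDomainRingHom k S.subtype f : AddMonoidAlgebra k M) = 0 := by
      apply AddMonoidAlgebra.coeff_eq_zero.mp
      apply Finsupp.support_eq_empty.mp
      rw [Finset.eq_empty_iff_forall_notMem]
      intro m hm
      have h1 := hmem m hm
      have h2 : m ∈ (S : Set M) := by
        have := Finsupp.mapDomain_support hm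
        obtain ⟨s, _, rfl⟩ := Finset.mem_image.mp this
        exact s.2
      exact h1 h2
    have hinj : Function.Injective
        (AddMonoidAlgebra.mapDomain (fun s : S => (s : M)) : AddMonoidAlgebra k S → AddMonoidAlgebra k M) :=
      AddMonoidAlgebra.mapDomain_injective Subtype.val_injective
    simp only [AddMonoidAlgebra.mapDomainRingHom, RingHom.coe_mk, MonoidHom.coe_mk,
      OneHom.coe_mk] at hzero
    exact hinj (by simpa using hzero)
  · intro z
    obtain ⟨y, rfl⟩ := Ideal.Quotient.mk_surjective z
    have claim : ∀ y : AddMonoidAlgebra k M,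
        Ideal.Quotient.mk J y ∈ Set.range ((Ideal.Quotient.mk J).comp
          (AddMonoidAlgebra.mapDomainRingHom k S.subtype)) := by
      intro y
      induction y using AddMonoidAlgebra.induction with
      | zero => exact ⟨0, by simp⟩
      | single_add m c g hmg hc ih =>
        obtain ⟨f, hf⟩ := ih
        by_cases hm : m ∈ S
        · refine ⟨AddMonoidAlgebra.single ⟨m, hm⟩ c + f, ?_⟩
          rw [map_add, map_add, hf]
          congr 1
          simp [AddMonoidAlgebra.mapDomainRingHom, AddMonoidAlgebra.mapDomain_single]
        · refine ⟨f, ?_⟩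
          rw [map_add, hf]
          have : (AddMonoidAlgebra.single m c : AddMonoidAlgebra k M) ∈ J := by
            rw [key]
            intro n hn
            have := Finsupp.support_single_subset hn
            simp only [Finset.mem_singleton] at this
            subst this; exact hm
          rw [Ideal.Quotient.eq_zero_iff_mem.mpr this, zero_add]
    exact claim y
end
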